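/- Let p be a prime and let r ≥ 1, with integers i_2, ..., i_r in {0, ..., d-1} and i_1 in {1, ..., d-1} such that i_1 + i_2 + ... + i_r ≡ 0 (mod d), where d divides q-1 and q is a power of p with r ≤ p. Let χ be a multiplicative character of F_q of order d. Then the character sum ∑_{ξ ∈ F_q} χ(ξ^{i_1}(ξ+1)^{i_2}···(ξ+r-1)^{i_r}) equals -1 + ∑_{η ∈ F_q} χ((1+η)^{i_2}(1+2η)^{i_3}···(1+(r-1)η)^{i_r}). -/

import Mathlib

open scoped Classical

theorem char_sum_shift (p q : ℕ) (hp : p.Prime) (k : ℕ) (hk : 0 < k) (hq : q = p ^ k)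
    (F : Type*) [Field F] [Fintype F] [CharP F p] (hcard : Fintype.card F = q)
    (d : ℕ) (hd : d ∣ q - 1) (r : ℕ) (hr : 1 ≤ r) (hrp : r ≤ p)
    (i : Fin r → ℕ) (hilt : ∀ j, i j < d) (hi0 : 1 ≤ i ⟨0, hr⟩)
    (hsum : d ∣ ∑ j, i j)
    (χ : MulChar F ℂ) (hχ : orderOf χ = d) :
    (∑ ξ : F, χ (∏ j : Fin r, (ξ + ((j : ℕ) : F)) ^ (i j))) =
      -1 + ∑ η : F,
        χ (∏ j ∈ Finset.univ.filter (fun j : Fin r => j ≠ ⟨0, hr⟩),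
            (1 + ((j : ℕ) : F) * η) ^ (i j)) := by
  classical
  set j0 : Fin r := ⟨0, hr⟩ with hj0
  set f : F → ℂ := fun η =>
    χ (∏ j ∈ Finset.univ.filter (fun j : Fin r => j ≠ j0),
        (1 + ((j : ℕ) : F) * η) ^ (i j)) with hf
  have hN : (∑ j, i j) ≠ 0 := by
    have : i j0 ≤ ∑ j, i j := Finset.single_le_sum (fun j _ => Nat.zero_le _) (Finset.mem_univ j0)
    omega
  -- value at ξ = 0 of the LHS summand is 0
  have h0 : χ (∏ j : Fin r, ((0 : F) + ((j : ℕ) : F)) ^ (i j)) = 0 := by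
    have : ∏ j : Fin r, ((0 : F) + ((j : ℕ) : F)) ^ (i j) = 0 := by
      apply Finset.prod_eq_zero (Finset.mem_univ j0)
      simp [hj0, zero_pow (by omega : i j0 ≠ 0)]
      exact Nat.one_le_iff_ne_zero.mp hi0
    rw [this, χ.map_nonunit not_isUnit_zero]
  -- key identity for nonzero ξ
  have key : ∀ ξ : F, ξ ≠ 0 →
      χ (∏ j : Fin r, (ξ + ((j : ℕ) : F)) ^ (i j)) = f ξ⁻¹ := by
    intro ξ hξ
    have h1 : ∀ j : Fin r, ξ + ((j : ℕ) : F) = ξ * (1 + ((j : ℕ) : F) * ξ⁻¹) := by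
      intro j; field_simp
    have hprod : ∏ j : Fin r, (ξ + ((j : ℕ) : F)) ^ (i j) =
        ξ ^ (∑ j, i j) *
          ∏ j ∈ Finset.univ.filter (fun j : Fin r => j ≠ j0),
            (1 + ((j : ℕ) : F) * ξ⁻¹) ^ (i j) := by
      have hfil : ∏ j ∈ Finset.univ.filter (fun j : Fin r => j ≠ j0),
          (1 + ((j : ℕ) : F) * ξ⁻¹) ^ (i j)
          = ∏ j : Fin r, (1 + ((j : ℕ) : F) * ξ⁻¹) ^ (i j) := by
        apply Finset.prod_filter_of_ne
        intro j _ hne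
        intro hj; apply hne
        simp [hj, hj0]
      rw [hfil]
      simp_rw [h1, mul_pow]
      rw [Finset.prod_mul_distrib, Finset.prod_pow_eq_pow_sum]
    have hpow1 : χ ξ ^ (∑ j, i j) = 1 := by
      have hone : χ ^ (∑ j, i j) = 1 := by
        rw [← hχ] at hsum; exact orderOf_dvd_iff_pow_eq_one.mp hsum
      rw [← χ.pow_apply' hN, hone, MulChar.one_apply (isUnit_iff_ne_zero.mpr hξ)]
    rw [hprod, map_mul, map_pow, hpow1, one_mul]
  -- f 0 = 1
  have hf0 : f 0 = 1 := by
    simp only [hf, mul_zero, add_zero, one_pow, Finset.prod_const_one, map_one]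
  have hmem : (0 : F) ∈ (Finset.univ : Finset F) := Finset.mem_univ 0
  rw [← Finset.sum_erase_add _ _ hmem, h0, add_zero]
  have hstep : ∑ ξ ∈ Finset.univ.erase (0 : F),
      χ (∏ j : Fin r, (ξ + ((j : ℕ) : F)) ^ (i j)) = ∑ ξ ∈ Finset.univ.erase (0 : F), f ξ := by
    rw [Finset.sum_congr rfl (fun ξ hξ => key ξ (Finset.ne_of_mem_erase hξ))]
    apply Finset.sum_bij' (fun ξ _ => ξ⁻¹) (fun ξ _ => ξ⁻¹) <;>
      intro a ha <;>
      simp_all [Finset.mem_erase, inv_ne_zero]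
  rw [hstep]
  have := Finset.sum_erase_add Finset.univ f hmem
  rw [hf0] at this
  linear_combination this
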